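/- Let A be a C*-algebra, let π : A → B(H) be a topologically irreducible representation of A whose image π(A) equals the algebra K(H) of compact operators on H, and let τ : A → B(H') be a topologically irreducible representation of A with ker π ⊆ ker τ. Then π and τ are unitarily equivalent: there exists a unitary operator U : H → H' such that τ(a) = U π(a) U* for all a ∈ A. (Consequently the singleton {π} is a closed subset of the spectrum of A, being the set of irreducible representations vanishing on ker π.) -/

import Mathlib

noncomputable section

open scoped InnerProductSpace CStarAlgebra

section RankOne
variable {H : Type} [NormedAddCommGroup H] [InnerProductSpace ℂ H]

/-- rank one operator `v ↦ ⟪y, v⟫ • x`. -/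
def rk (y x : H) : H →L[ℂ] H := (innerSL ℂ y).smulRight x

lemma rk_apply (y x v : H) : rk y x v = ⟪y, v⟫_ℂ • x := rfl

lemma rk_add (y x x' : H) : rk y (x + x') = rk y x + rk y x' := by
  ext v; simp [rk_apply, smul_add]

lemma rk_smul (y : H) (c : ℂ) (x : H) : rk y (c • x) = c • rk y x := by
  ext v; simp only [rk_apply, ContinuousLinearMap.coe_smul', Pi.smul_apply]; rw [smul_comm]

lemma comp_rk (T : H →L[ℂ] H) (y x : H) : T ∘L rk y x = rk y (T x) := by
  ext v; simp [rk_apply]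

lemma rk_comp_rk (y x w z : H) : rk y x ∘L rk w z = ⟪y, z⟫_ℂ • rk w x := by
  ext v; simp [rk_apply, inner_smul_right, smul_smul, mul_comm]

lemma isCompactOperator_rk (y x : H) : IsCompactOperator (rk y x) := by
  refine ⟨(fun c : ℂ => c • x) '' Metric.closedBall 0 ‖y‖, ?_, ?_⟩
  · exact ((isCompact_closedBall _ _).image (continuous_id.smul continuous_const))
  · filter_upwards [Metric.ball_mem_nhds (0 : H) one_pos] with v hv
    refine ⟨⟪y, v⟫_ℂ, ?_, rfl⟩
    simp only [Metric.mem_closedBall, dist_zero_right]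
    calc ‖⟪y, v⟫_ℂ‖ ≤ ‖y‖ * ‖v‖ := norm_inner_le_norm _ _
    _ ≤ ‖y‖ * 1 := by
        have := le_of_lt (by simpa using hv)
        exact mul_le_mul_of_nonneg_left this (norm_nonneg _)
    _ = ‖y‖ := mul_one _

variable [CompleteSpace H]

lemma adjoint_rk (y x : H) : ContinuousLinearMap.adjoint (rk y x) = rk x y := by
  ext v
  refine ext_inner_left ℂ fun w => ?_
  rw [ContinuousLinearMap.adjoint_inner_right]
  simp [rk_apply, inner_smul_right, inner_smul_left, mul_comm]

example (y x : H) : star (rk y x) = rk x y := by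
  rw [ContinuousLinearMap.star_eq_adjoint, adjoint_rk]

end RankOne

section Dominate

lemma abs_le_norm_of_mem_quasispectrum {B : Type*} [NonUnitalCStarAlgebra B] {b : B} {x : ℝ}
    (hx : x ∈ quasispectrum ℝ b) : |x| ≤ ‖b‖ := by
  rw [Unitization.quasispectrum_eq_spectrum_inr' ℝ ℂ] at hx
  have := spectrum.norm_le_norm_of_mem hx
  simpa [Unitization.norm_inr] using this

/-- If `ker φ ⊆ ker ψ` for star homs of C*-algebras, then `‖ψ a‖ ≤ ‖φ a‖`. -/
lemma norm_dominate {A B C : Type*} [NonUnitalCStarAlgebra A] [NonUnitalCStarAlgebra B]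
    [NonUnitalCStarAlgebra C] (φ : A →⋆ₙₐ[ℂ] B) (ψ : A →⋆ₙₐ[ℂ] C)
    (h : ∀ a, φ a = 0 → ψ a = 0) (a : A) : ‖ψ a‖ ≤ ‖φ a‖ := by
  have key : ∀ b : A, IsSelfAdjoint b → ‖ψ b‖ ≤ ‖φ b‖ := by
    intro b hb
    set r := ‖φ b‖ with hrdef
    have hr : (0:ℝ) ≤ r := norm_nonneg _
    set f : ℝ → ℝ := fun t => max (t - r) 0 + min (t + r) 0 with hf
    have hf0 : f 0 = 0 := by simp [hf, hr]
    have hfc : Continuous f := by fun_prop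
    have hfz : ∀ t : ℝ, |t| ≤ r → f t = 0 := by
      intro t ht
      rw [abs_le] at ht
      simp only [hf]
      rw [max_eq_right (by linarith), min_eq_right (by linarith), add_zero]
    have hzf : ∀ t : ℝ, f t = 0 → |t| ≤ r := by
      intro t ht
      by_contra hc
      rw [not_le] at hc
      rcases lt_abs.mp hc with h1 | h1
      · rw [hf] at ht
        simp only at ht
        rw [max_eq_left (by linarith), min_eq_right (by linarith)] at ht
        linarith
      · rw [hf] at ht
        simp only at ht
        rw [max_eq_right (by linarith), min_eq_left (by linarith)] at ht
        linarith
    have hψb : IsSelfAdjoint (ψ b) := hb.map ψ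
    have hφb : IsSelfAdjoint (φ b) := hb.map φ
    have hcontφ : Continuous φ := map_continuous φ
    have hcontψ : Continuous ψ := map_continuous ψ
    have hφ0 : φ (cfcₙ f b) = 0 := by
      rw [NonUnitalStarAlgHom.map_cfcₙ φ f b (hf := hfc.continuousOn) (hf₀ := hf0)
        (hφ := hcontφ) (ha := hb) (hφa := hφb)]
      rw [← cfcₙ_zero ℝ (φ b)]
      apply cfcₙ_congr
      intro x hx
      exact hfz x (abs_le_norm_of_mem_quasispectrum hx)
    have hψ0 : cfcₙ f (ψ b) = 0 := by
      rw [← NonUnitalStarAlgHom.map_cfcₙ ψ f b (hf := hfc.continuousOn) (hf₀ := hf0)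
        (hφ := hcontψ) (ha := hb) (hφa := hψb)]
      rw [h _ hφ0]
    have hspec : ∀ x ∈ quasispectrum ℝ (ψ b), |x| ≤ r := by
      intro x hx
      refine hzf x ?_
      have := norm_apply_le_norm_cfcₙ f (ψ b) hx (hfc.continuousOn) hf0 hψb
      rw [hψ0] at this
      simpa using this
    calc ‖ψ b‖ = ‖cfcₙ (id : ℝ → ℝ) (ψ b)‖ := by rw [cfcₙ_id ℝ (ψ b)]
      _ ≤ r := norm_cfcₙ_le (fun x hx => by simpa using hspec x hx)
  have h1 := key (star a * a) (IsSelfAdjoint.star_mul_self a)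
  rw [map_mul, map_star, map_mul, map_star] at h1
  have e1 : ‖star (ψ a) * ψ a‖ = ‖ψ a‖ * ‖ψ a‖ := CStarRing.norm_star_mul_self
  have e2 : ‖star (φ a) * φ a‖ = ‖φ a‖ * ‖φ a‖ := CStarRing.norm_star_mul_self
  rw [e1, e2] at h1
  nlinarith [norm_nonneg (ψ a), norm_nonneg (φ a)]

end Dominate

section Approx
variable {H : Type} [NormedAddCommGroup H] [InnerProductSpace ℂ H] [CompleteSpace H]

lemma compact_approx (T : H →L[ℂ] H) (hT : IsCompactOperator ⇑T) {ε : ℝ} (hε : 0 < ε) :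
    ∃ (n : ℕ) (y x : Fin n → H), ‖T - ∑ i, rk (y i) (x i)‖ ≤ ε := by
  have hK : IsCompact (closure (⇑T '' Metric.closedBall 0 1)) := by
    exact IsCompactOperator.isCompact_closure_image_closedBall (f := (T : H →ₗ[ℂ] H)) hT 1
  obtain ⟨s, hsfin, hscov⟩ := (Metric.totallyBounded_iff.mp hK.totallyBounded) ε hε
  set F : Submodule ℂ H := Submodule.span ℂ (s : Set H) with hF
  haveI : FiniteDimensional ℂ F := FiniteDimensional.span_of_finite ℂ hsfin
  set P := F.orthogonalProjectionOnto with hP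
  have hdist : ∀ v : H, ‖v‖ ≤ 1 → ‖T v - (P (T v) : H)‖ ≤ ε := by
    intro v hv
    have : T v ∈ closure (⇑T '' Metric.closedBall 0 1) :=
      subset_closure ⟨v, by simpa using hv, rfl⟩
    obtain ⟨w, hws, hwd⟩ := Set.mem_iUnion₂.mp (hscov this)
    have hwF : w ∈ F := Submodule.subset_span hws
    calc ‖T v - (P (T v) : H)‖ = ⨅ x : F, ‖T v - x‖ := Submodule.starProjection_minimal _
      _ ≤ ‖T v - w‖ := ciInf_le ⟨0, fun c hc => by obtain ⟨x, rfl⟩ := hc; positivity⟩ (⟨w, hwF⟩ : F)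
      _ ≤ ε := le_of_lt (by simpa [dist_eq_norm] using hwd)
  let b := stdOrthonormalBasis ℂ F
  set n := Module.finrank ℂ F
  refine ⟨n, fun i => ContinuousLinearMap.adjoint T (b i : H), fun i => (b i : H), ?_⟩
  have hsum : ∀ v : H, (∑ i, rk (ContinuousLinearMap.adjoint T (b i : H)) (b i : H)) v
      = (P (T v) : H) := by
    intro v
    rw [b.orthogonalProjectionOnto_apply_eq_sum]
    simp only [ContinuousLinearMap.sum_apply, rk_apply, Submodule.coe_sum]
    refine Finset.sum_congr rfl fun i _ => ?_
    simp [ContinuousLinearMap.adjoint_inner_left]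
  refine ContinuousLinearMap.opNorm_le_bound _ hε.le fun v => ?_
  rcases eq_or_ne v 0 with rfl | hv
  · simp
  · have hnv : 0 < ‖v‖ := norm_pos_iff.mpr hv
    set u := (‖v‖⁻¹ : ℂ) • v with hu
    have hun : ‖u‖ ≤ 1 := by
      rw [hu, norm_smul]
      simp [hnv.ne', inv_mul_cancel₀]
    have hveq : v = (‖v‖ : ℂ) • u := by
      rw [hu, smul_smul]
      norm_cast
      rw [mul_inv_cancel₀ hnv.ne', one_smul]
    calc ‖(T - ∑ i, rk (ContinuousLinearMap.adjoint T (b i : H)) (b i : H)) v‖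
        = ‖(‖v‖ : ℂ)• ((T - ∑ i, rk (ContinuousLinearMap.adjoint T (b i : H)) (b i : H)) u)‖ := by
          rw [← map_smul, ← hveq]
      _ = ‖v‖ * ‖(T - ∑ i, rk (ContinuousLinearMap.adjoint T (b i : H)) (b i : H)) u‖ := by
          rw [norm_smul]; norm_num
      _ ≤ ‖v‖ * ε := by
          refine mul_le_mul_of_nonneg_left ?_ (norm_nonneg v)
          rw [ContinuousLinearMap.sub_apply]
          have := hsum u
          rw [this]
          exact hdist u hun
      _ = ε * ‖v‖ := mul_comm _ _

end Approx


/-- If `π` is a topologically irreducible representation of a C*-algebra `A`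
whose image is the algebra of compact operators on `H`, then any topologically irreducible
representation `τ` of `A` with `ker π ⊆ ker τ` is unitarily equivalent to `π`. -/
theorem irreducible_rep_factoring_through_compacts_unique
    {A : Type} [NonUnitalNormedRing A] [StarRing A] [CStarRing A]
    [NormedSpace ℂ A] [IsScalarTower ℂ A A] [SMulCommClass ℂ A A] [StarModule ℂ A]
    [CompleteSpace A]
    {H H' : Type} [NormedAddCommGroup H] [InnerProductSpace ℂ H] [CompleteSpace H]
    [NormedAddCommGroup H'] [InnerProductSpace ℂ H'] [CompleteSpace H']
    (π : A →⋆ₙₐ[ℂ] (H →L[ℂ] H)) (τ : A →⋆ₙₐ[ℂ] (H' →L[ℂ] H'))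
    (hπ_nontriv : Nontrivial H) (hπ_ne : ∃ a : A, π a ≠ 0)
    (hπ_irr : ∀ W : Submodule ℂ H, IsClosed (W : Set H) →
      (∀ a : A, ∀ v ∈ W, π a v ∈ W) → W = ⊥ ∨ W = ⊤)
    (hτ_nontriv : Nontrivial H') (hτ_ne : ∃ a : A, τ a ≠ 0)
    (hτ_irr : ∀ W : Submodule ℂ H', IsClosed (W : Set H') →
      (∀ a : A, ∀ v ∈ W, τ a v ∈ W) → W = ⊥ ∨ W = ⊤)
    (himg : Set.range (⇑π) = {T : H →L[ℂ] H | IsCompactOperator ⇑T})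
    (hker : ∀ a : A, π a = 0 → τ a = 0) :
    ∃ U : H ≃ₗᵢ[ℂ] H', ∀ (a : A) (v : H'), τ a v = U (π a (U.symm v)) := by
  classical
  letI : NonUnitalCStarAlgebra A := {}
  have hnorm : ∀ a : A, ‖τ a‖ ≤ ‖π a‖ := norm_dominate π τ hker
  have hcomp : ∀ a : A, IsCompactOperator ⇑(π a) := fun a => by
    have : π a ∈ Set.range ⇑π := ⟨a, rfl⟩
    rw [himg] at this; exact this
  have hsec : ∀ T : H →L[ℂ] H, IsCompactOperator ⇑T → ∃ a, π a = T := fun T hT => by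
    have : T ∈ Set.range ⇑π := by rw [himg]; exact hT
    exact this
  have htr : ∀ a b : A, π a = π b → τ a = τ b := fun a b h => by
    have h0 : π (a - b) = 0 := by rw [map_sub, h, sub_self]
    have := hker _ h0
    rwa [map_sub, sub_eq_zero] at this
  -- Step A
  have stepA : ∃ (y₀ x₀ : H) (a₁ : A), π a₁ = rk y₀ x₀ ∧ τ a₁ ≠ 0 := by
    by_contra hall
    push_neg at hall
    obtain ⟨a₀, ha₀⟩ := hτ_ne
    refine ha₀ ?_
    have hle : ∀ ε : ℝ, 0 < ε → ‖τ a₀‖ ≤ ε := by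
      intro ε hε
      obtain ⟨n, y, x, happ⟩ := compact_approx (π a₀) (hcomp a₀) hε
      choose c hc using fun i : Fin n => hsec (rk (y i) (x i)) (isCompactOperator_rk _ _)
      have h1 : π (a₀ - ∑ i, c i) = π a₀ - ∑ i, rk (y i) (x i) := by
        rw [map_sub, map_sum]
        congr 1
        exact Finset.sum_congr rfl fun i _ => hc i
      have h2 : τ (a₀ - ∑ i, c i) = τ a₀ := by
        rw [map_sub, map_sum]
        rw [Finset.sum_congr rfl fun i _ => hall (y i) (x i) (c i) (hc i),
          Finset.sum_const_zero, sub_zero]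
      calc ‖τ a₀‖ = ‖τ (a₀ - ∑ i, c i)‖ := by rw [h2]
        _ ≤ ‖π (a₀ - ∑ i, c i)‖ := hnorm _
        _ = ‖π a₀ - ∑ i, rk (y i) (x i)‖ := by rw [h1]
        _ ≤ ε := happ
    rw [← norm_le_zero_iff]
    by_contra hpos
    rw [not_le] at hpos
    linarith [hle (‖τ a₀‖ / 2) (by linarith)]
  -- unit vector e
  haveI := hπ_nontriv
  obtain ⟨w, hw⟩ := exists_ne (0 : H)
  have hnw : (0:ℝ) < ‖w‖ := norm_pos_iff.mpr hw
  set e : H := (‖w‖⁻¹ : ℂ) • w with he_def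
  have he : ‖e‖ = 1 := by
    rw [he_def, norm_smul]
    simp [hnw.ne', inv_mul_cancel₀]
  have hee : ⟪e, e⟫_ℂ = 1 := by
    rw [inner_self_eq_norm_sq_to_K, he]; norm_num
  -- preimage of rk e e
  obtain ⟨p, hp⟩ := hsec (rk e e) (isCompactOperator_rk e e)
  set Q := τ p with hQ_def
  have hPP : rk e e ∘L rk e e = rk e e := by rw [rk_comp_rk, hee, one_smul]
  have hQQ : Q * Q = Q := by
    rw [hQ_def, ← map_mul]
    exact htr _ _ (by rw [map_mul, hp]; exact hPP)
  have hQstar : star Q = Q := by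
    rw [hQ_def, ← map_star]
    refine htr _ _ ?_
    rw [map_star, hp, ContinuousLinearMap.star_eq_adjoint, adjoint_rk]
  have hQne : Q ≠ 0 := by
    obtain ⟨y₀, x₀, a₁, ha₁, hne⟩ := stepA
    intro hQ0
    obtain ⟨b, hb⟩ := hsec (rk e x₀) (isCompactOperator_rk e x₀)
    obtain ⟨c, hc⟩ := hsec (rk y₀ e) (isCompactOperator_rk y₀ e)
    have hfac : π (b * (p * c)) = rk y₀ x₀ := by
      rw [map_mul, map_mul, hb, hp, hc]
      calc rk e x₀ * (rk e e * rk y₀ e) = rk e x₀ ∘L (rk e e ∘L rk y₀ e) := rfl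
        _ = rk e x₀ ∘L rk y₀ e := by rw [rk_comp_rk, hee, one_smul]
        _ = rk y₀ x₀ := by rw [rk_comp_rk, hee, one_smul]
    have := htr _ _ (hfac.trans ha₁.symm)
    rw [map_mul, map_mul, ← hQ_def, hQ0, zero_mul, mul_zero] at this
    exact hne this.symm
  -- the vector e'
  obtain ⟨v', hv'⟩ : ∃ v', Q v' ≠ 0 := by
    by_contra hc
    push_neg at hc
    exact hQne (ContinuousLinearMap.ext hc)
  have hnQv : (0:ℝ) < ‖Q v'‖ := norm_pos_iff.mpr hv'
  set e' : H' := (‖Q v'‖⁻¹ : ℂ) • Q v' with he'_def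
  have he' : ‖e'‖ = 1 := by
    rw [he'_def, norm_smul]
    simp [hnQv.ne', inv_mul_cancel₀]
  have he'e' : ⟪e', e'⟫_ℂ = 1 := by
    rw [inner_self_eq_norm_sq_to_K, he']; norm_num
  have hQe' : Q e' = e' := by
    rw [he'_def, map_smul]
    congr 1
    have := congrArg (fun S : H' →L[ℂ] H' => S v') hQQ
    simpa [ContinuousLinearMap.mul_apply] using this
  have he'ne : e' ≠ 0 := by
    intro h
    rw [h, norm_zero] at he'
    norm_num at he'
  -- the map u
  have hch : ∀ x : H, ∃ a, π a = rk e x := fun x => hsec _ (isCompactOperator_rk e x)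
  choose ch hchp using hch
  set u : H → H' := fun x => τ (ch x) e' with hu_def
  have utr : ∀ (a : A) (x : H), π a = rk e x → τ a e' = u x := fun a x h => by
    rw [hu_def]
    simp only
    rw [htr a (ch x) (h.trans (hchp x).symm)]
  have uadd : ∀ x y : H, u (x + y) = u x + u y := by
    intro x y
    have h := htr (ch (x + y)) (ch x + ch y) (by rw [map_add, hchp, hchp, hchp, rk_add])
    show τ (ch (x + y)) e' = τ (ch x) e' + τ (ch y) e'
    rw [h, map_add, ContinuousLinearMap.add_apply]
  have usmul : ∀ (c : ℂ) (x : H), u (c • x) = c • u x := by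
    intro c x
    have h := htr (ch (c • x)) (c • ch x) (by rw [map_smul, hchp, hchp, rk_smul])
    have h2 := congrArg (fun S : H' →L[ℂ] H' => S e') (h.trans (map_smul τ c (ch x)))
    simp only [ContinuousLinearMap.smul_apply] at h2
    exact h2
  have hinner : ∀ x y : H, ⟪u x, u y⟫_ℂ = ⟪x, y⟫_ℂ := by
    intro x y
    have hmul : τ (star (ch x) * ch y) = ⟪x, y⟫_ℂ • Q := by
      rw [show (⟪x, y⟫_ℂ • Q : H' →L[ℂ] H') = τ (⟪x, y⟫_ℂ • p) by rw [map_smul, hQ_def]]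
      refine htr _ _ ?_
      rw [map_mul, map_star, map_smul, hchp, hchp, hp, ContinuousLinearMap.star_eq_adjoint,
        adjoint_rk]
      calc rk x e * rk e y = rk x e ∘L rk e y := rfl
        _ = ⟪x, y⟫_ℂ • rk e e := by rw [rk_comp_rk]
    calc ⟪u x, u y⟫_ℂ = ⟪τ (ch x) e', τ (ch y) e'⟫_ℂ := rfl
      _ = ⟪e', ContinuousLinearMap.adjoint (τ (ch x)) (τ (ch y) e')⟫_ℂ := by
          rw [ContinuousLinearMap.adjoint_inner_right]
      _ = ⟪e', (star (τ (ch x)) * τ (ch y)) e'⟫_ℂ := by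
          rw [ContinuousLinearMap.star_eq_adjoint]; rfl
      _ = ⟪e', (⟪x, y⟫_ℂ • Q) e'⟫_ℂ := by rw [← map_star, ← map_mul, hmul]
      _ = ⟪x, y⟫_ℂ * ⟪e', Q e'⟫_ℂ := by
          rw [ContinuousLinearMap.smul_apply, inner_smul_right]
      _ = ⟪x, y⟫_ℂ := by rw [hQe', he'e', mul_one]
  have unorm : ∀ x : H, ‖u x‖ = ‖x‖ := by
    intro x
    have h1 := hinner x x
    rw [inner_self_eq_norm_sq_to_K, inner_self_eq_norm_sq_to_K] at h1
    have h2 : (‖u x‖ : ℝ) ^ 2 = (‖x‖ : ℝ) ^ 2 := by exact_mod_cast h1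
    nlinarith [norm_nonneg (u x), norm_nonneg x]
  set U₀ : H →ₗᵢ[ℂ] H' :=
    { toFun := u
      map_add' := uadd
      map_smul' := usmul
      norm_map' := unorm } with hU₀_def
  have hintertwine : ∀ (a : A) (x : H), τ a (u x) = u (π a x) := by
    intro a x
    have h1 : π (a * ch x) = rk e (π a x) := by
      rw [map_mul, hchp]
      exact comp_rk (π a) e x
    have h2 := utr _ _ h1
    rw [map_mul, ContinuousLinearMap.mul_apply] at h2
    exact h2
  -- surjectivity
  have hWclosed : IsClosed (Set.range u) := by
    have : Isometry u := U₀.isometry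
    exact this.isClosedEmbedding.isClosed_range
  set W : Submodule ℂ H' := LinearMap.range U₀.toLinearMap with hW_def
  have hWrange : (W : Set H') = Set.range u := by
    rw [hW_def]
    rfl
  have hWcl : IsClosed (W : Set H') := by rw [hWrange]; exact hWclosed
  have hWinv : ∀ a : A, ∀ v ∈ W, τ a v ∈ W := by
    intro a v hv
    obtain ⟨x, rfl⟩ := hv
    exact ⟨π a x, (hintertwine a x).symm⟩
  rcases hτ_irr W hWcl hWinv with hbot | htop
  · exfalso
    have : u e ∈ W := ⟨e, rfl⟩
    rw [hbot] at this
    have hue : u e = e' := by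
      rw [← utr p e hp, ← hQ_def, hQe']
    rw [Submodule.mem_bot] at this
    exact he'ne (hue ▸ this)
  · have hsurj : Function.Surjective ⇑U₀ := by
      show Function.Surjective ⇑U₀.toLinearMap; rw [← LinearMap.range_eq_top]
      exact htop
    refine ⟨LinearIsometryEquiv.ofSurjective U₀ hsurj, fun a v => ?_⟩
    set U := LinearIsometryEquiv.ofSurjective U₀ hsurj with hU
    have hcoe : ⇑U = u := by rw [hU, LinearIsometryEquiv.coe_ofSurjective]; rfl
    have h1 : v = U (U.symm v) := (U.apply_symm_apply v).symm
    calc τ a v = τ a (U (U.symm v)) := by rw [← h1]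
      _ = τ a (u (U.symm v)) := by rw [hcoe]
      _ = u (π a (U.symm v)) := hintertwine a _
      _ = U (π a (U.symm v)) := by rw [hcoe]
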